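/- Fix an integer k ≥ 2, let S denote the set of k-free positive integers (those divisible by no k-th power of a prime), and define η(q,a) = ∑_{d ≥ 1, (q,d^k) | a} μ(d)/[q, d^k]. Then for all positive integers q, a: (1/X) · #{ n ≤ X : n ∈ S, n ≡ a (mod q) } → η(q,a) as X → ∞. -/

import Mathlib

open ArithmeticFunction Filter

/-- `η(q,a) = ∑_{d ≥ 1, (q,d^k) | a} μ(d)/[q, d^k]`. -/
noncomputable def eta (k q a : ℕ) : ℝ :=
  ∑' d : ℕ+, if Nat.gcd q ((d : ℕ) ^ k) ∣ a then
    (moebius (d : ℕ) : ℝ) / (Nat.lcm q ((d : ℕ) ^ k) : ℝ) else 0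

section AuxLemmas

open Finset
open scoped Classical

lemma kfree_sum (k n : ℕ) (hk : 1 ≤ k) (hn : n ≠ 0) :
    ∑ d ∈ n.divisors, (if d ^ k ∣ n then (moebius d : ℤ) else 0)
      = if (∀ p : ℕ, p.Prime → ¬ p ^ k ∣ n) then 1 else 0 := by
  set f : ℕ →₀ ℕ := Finsupp.mapRange (· / k) (by simp) n.factorization with hf
  have hfapp : ∀ p, f p = n.factorization p / k := fun p => rfl
  have hfsupp : ∀ p ∈ f.support, Nat.Prime p := by
    intro p hp
    have h2 := Finsupp.support_mapRange (f := fun e => e / k) (hf := by simp)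
      (g := n.factorization) hp
    rw [Nat.support_factorization] at h2
    exact Nat.prime_of_mem_primeFactors h2
  set m : ℕ := f.prod (· ^ ·) with hm
  have hmfact : m.factorization = f := Nat.prod_pow_factorization_eq_self hfsupp
  have hm0 : m ≠ 0 := by
    rw [hm, Finsupp.prod]
    exact Finset.prod_ne_zero_iff.mpr fun p hp => pow_ne_zero _ (hfsupp p hp).pos.ne'
  -- d^k ∣ n ↔ d ∣ m, for d ≠ 0
  have key : ∀ d : ℕ, d ≠ 0 → (d ^ k ∣ n ↔ d ∣ m) := by
    intro d hd
    rw [← Nat.factorization_le_iff_dvd (pow_ne_zero _ hd) hn,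
        ← Nat.factorization_le_iff_dvd hd hm0, hmfact, Nat.factorization_pow,
        Finsupp.le_def, Finsupp.le_def]
    constructor
    · intro h p
      have := h p
      simp only [Finsupp.smul_apply, smul_eq_mul] at this
      rw [hfapp]
      exact Nat.le_div_iff_mul_le hk |>.mpr (by linarith [this])
    · intro h p
      have := h p
      rw [hfapp] at this
      simp only [Finsupp.smul_apply, smul_eq_mul]
      calc k * d.factorization p ≤ k * (n.factorization p / k) :=
            Nat.mul_le_mul_left _ this
        _ ≤ n.factorization p := Nat.mul_div_le _ _
  -- m ∣ n
  have hmn : m ∣ n := by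
    rw [← Nat.factorization_le_iff_dvd hm0 hn, hmfact, Finsupp.le_def]
    intro p
    rw [hfapp]
    exact le_trans (Nat.div_le_self _ _) (le_refl _)
  -- kfree ↔ m = 1
  have hfree : (∀ p : ℕ, p.Prime → ¬ p ^ k ∣ n) ↔ m = 1 := by
    constructor
    · intro h
      by_contra hm1
      obtain ⟨p, hp, hpm⟩ := Nat.exists_prime_and_dvd hm1
      exact h p hp ((key p hp.pos.ne').mpr hpm)
    · intro h1 p hp hpk
      have : p ∣ m := (key p hp.pos.ne').mp hpk
      rw [h1, Nat.dvd_one] at this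
      exact hp.ne_one this
  -- sum over divisors n with d^k ∣ n = sum over divisors m
  have hsum : ∑ d ∈ n.divisors, (if d ^ k ∣ n then (moebius d : ℤ) else 0)
      = ∑ d ∈ m.divisors, (moebius d : ℤ) := by
    rw [← Finset.sum_filter]
    apply Finset.sum_congr _ (fun _ _ => rfl)
    ext d
    simp only [Finset.mem_filter, Nat.mem_divisors]
    constructor
    · rintro ⟨⟨hdn, _⟩, hdk⟩
      have hd0 : d ≠ 0 := fun h => hn (by simpa [h] using hdn)
      exact ⟨(key d hd0).mp hdk, hm0⟩
    · rintro ⟨hdm, _⟩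
      have hd0 : d ≠ 0 := fun h => hm0 (by simpa [h] using hdm)
      exact ⟨⟨dvd_trans hdm hmn, hn⟩, (key d hd0).mpr hdm⟩
  rw [hsum, hfree]
  have := ArithmeticFunction.moebius_mul_coe_zeta
  have h2 : (moebius * ((ArithmeticFunction.zeta : ArithmeticFunction ℕ) : ArithmeticFunction ℤ)) m = (1 : ArithmeticFunction ℤ) m := by
    rw [this]
  rw [ArithmeticFunction.coe_mul_zeta_apply, ArithmeticFunction.one_apply] at h2
  rw [h2]; congr 1

/-- Set-to-finset card. -/
lemma setcard_eq (Y : ℝ) (hY : 0 ≤ Y) (P : ℕ → Prop) [DecidablePred P] :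
    Nat.card {n : ℕ | 0 < n ∧ (n : ℝ) ≤ Y ∧ P n}
      = ({x ∈ Finset.Ioc 0 ⌊Y⌋₊ | P x}).card := by
  have hset : {n : ℕ | 0 < n ∧ (n : ℝ) ≤ Y ∧ P n}
      = ↑({x ∈ Finset.Ioc 0 ⌊Y⌋₊ | P x}) := by
    ext n
    simp only [Set.mem_setOf_eq, Finset.coe_filter, Finset.mem_Ioc, Set.mem_setOf_eq]
    rw [Nat.le_floor_iff hY]
    tauto
  rw [hset, Nat.card_coe_set_eq, Set.ncard_coe_finset]

/-- Counting m ≡ c mod r, m ∈ (0, Y]. -/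
lemma count_modeq (r c : ℕ) (hr : 0 < r) (Y : ℝ) (hY : 0 ≤ Y) :
    |(Nat.card {m : ℕ | 0 < m ∧ (m : ℝ) ≤ Y ∧ m ≡ c [MOD r]} : ℝ) - Y / r| ≤ 2 := by
  rw [setcard_eq Y hY]
  set M := ⌊Y⌋₊ with hM
  set N : ℕ := #{x ∈ Finset.Ioc 0 M | x ≡ c [MOD r]} with hN
  have hrQ : (0:ℚ) < (r:ℚ) := by exact_mod_cast hr
  have hQ : |(N:ℚ) - (M:ℚ)/r| ≤ 1 := by
    have hcval : ((N:ℕ) : ℤ) = max (⌊((M:ℚ) - c) / r⌋ - ⌊((0:ℕ) - c : ℚ) / r⌋) 0 :=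
      Nat.Ioc_filter_modEq_card 0 M hr c
    set t : ℤ := ⌊((M:ℚ) - c) / r⌋ - ⌊((0:ℕ) - c : ℚ) / r⌋ with ht
    have h1 : ((M:ℚ) - c) / r - 1 < (⌊((M:ℚ) - c) / r⌋ : ℚ) := Int.sub_one_lt_floor _
    have h2 : (⌊((M:ℚ) - c) / r⌋ : ℚ) ≤ ((M:ℚ) - c) / r := Int.floor_le _
    have h3 : ((0:ℕ) - c : ℚ) / r - 1 < (⌊((0:ℕ) - c : ℚ) / r⌋ : ℚ) := Int.sub_one_lt_floor _
    have h4 : (⌊((0:ℕ) - c : ℚ) / r⌋ : ℚ) ≤ ((0:ℕ) - c : ℚ) / r := Int.floor_le _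
    have hdiff : ((M:ℚ) - c) / r - ((0:ℕ) - c : ℚ)/r = (M:ℚ)/r := by push_cast; ring
    have htlo : (M:ℚ)/r - 1 ≤ (t:ℚ) := by push_cast [ht]; linarith
    have hthi : (t:ℚ) ≤ (M:ℚ)/r + 1 := by push_cast [ht]; linarith
    have hMnn : (0:ℚ) ≤ (M:ℚ)/r := by positivity
    rcases le_or_gt 0 t with h | h
    · have : ((N:ℕ):ℤ) = t := by rw [hcval, max_eq_left h]
      have hNt : (N:ℚ) = (t:ℚ) := by exact_mod_cast this
      rw [hNt, abs_le]; constructor <;> linarith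
    · have : ((N:ℕ):ℤ) = 0 := by rw [hcval, max_eq_right h.le]
      have hN0 : (N:ℚ) = 0 := by exact_mod_cast this
      have htQ : (t:ℚ) < 0 := by exact_mod_cast h
      rw [hN0, abs_le]; constructor <;> linarith
  -- transfer to ℝ
  have hR : |(N:ℝ) - (M:ℝ)/r| ≤ 1 := by
    have h2 : |((↑N - (M:ℚ)/r : ℚ) : ℝ)| ≤ 1 := by
      rw [← Rat.cast_abs]; exact_mod_cast hQ
    push_cast at h2
    exact h2
  have hr0 : (0:ℝ) < r := by exact_mod_cast hr
  have hr1 : (1:ℝ) ≤ r := by exact_mod_cast hr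
  have hMY : (M : ℝ) ≤ Y := Nat.floor_le hY
  have hYM : Y < M + 1 := Nat.lt_floor_add_one Y
  have h5 : |(M:ℝ)/r - Y/r| ≤ 1 := by
    rw [abs_le]
    constructor
    · have : Y/r ≤ ((M:ℝ)+1)/r := by gcongr
      have h6 : ((M:ℝ)+1)/r ≤ (M:ℝ)/r + 1 := by
        rw [add_div]; gcongr; rw [div_le_one hr0]; linarith
      linarith
    · have : (M:ℝ)/r ≤ Y/r := by gcongr
      linarith
  calc |(N:ℝ) - Y/r| ≤ |(N:ℝ) - (M:ℝ)/r| + |(M:ℝ)/r - Y/r| := abs_sub_le _ _ _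
    _ ≤ 2 := by linarith

/-- The congruence D m ≡ a (mod q) is one class mod q / gcd q D when solvable. -/
lemma cong_solve (q a D : ℕ) (hq : 0 < q) (hD : 0 < D) (hga : Nat.gcd q D ∣ a) :
    ∃ c : ℕ, ∀ m : ℕ, (D * m ≡ a [MOD q] ↔ m ≡ c [MOD q / Nat.gcd q D]) := by
  set g := Nat.gcd q D with hg
  have hg0 : 0 < g := Nat.gcd_pos_of_pos_left _ hq
  set v := q / g with hv
  set u := D / g with hu
  set b := a / g with hb
  have hq' : q = g * v := (Nat.mul_div_cancel' (Nat.gcd_dvd_left q D)).symm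
  have hD' : D = g * u := (Nat.mul_div_cancel' (Nat.gcd_dvd_right q D)).symm
  have ha' : a = g * b := (Nat.mul_div_cancel' hga).symm
  have hv0 : 0 < v := Nat.div_pos (Nat.le_of_dvd hq (Nat.gcd_dvd_left q D)) hg0
  have huv : Nat.Coprime u v := (Nat.coprime_div_gcd_div_gcd (hg ▸ hg0)).symm
  haveI : NeZero v := ⟨hv0.ne'⟩
  -- step 1: D * m ≡ a [MOD q] ↔ u * m ≡ b [MOD v]
  have step1 : ∀ m, (D * m ≡ a [MOD q] ↔ u * m ≡ b [MOD v]) := by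
    intro m
    rw [Nat.ModEq, Nat.ModEq]
    conv_lhs => rw [hq', hD', mul_assoc, Nat.mul_mod_mul_left, ha', Nat.mul_mod_mul_left]
    exact ⟨fun h => Nat.eq_of_mul_eq_mul_left hg0 h, fun h => by rw [h]⟩
  -- step 2: invert u mod v
  set w : (ZMod v)ˣ := ZMod.unitOfCoprime u huv with hw
  set c : ℕ := (((w⁻¹ : (ZMod v)ˣ) : ZMod v) * (b : ZMod v)).val with hc
  refine ⟨c, fun m => ?_⟩
  rw [step1 m, ← ZMod.natCast_eq_natCast_iff, ← ZMod.natCast_eq_natCast_iff]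
  push_cast
  rw [hc, ZMod.natCast_val, ZMod.cast_id]
  have hwu : (w : ZMod v) = (u : ZMod v) := rfl
  constructor
  · intro h
    rw [← h, ← hwu, ← mul_assoc, Units.inv_mul, one_mul]
  · intro h
    rw [h, ← hwu, ← mul_assoc, Units.mul_inv, one_mul]

lemma lcm_eq (q D : ℕ) (hq : 0 < q) (hD : 0 < D) :
    Nat.lcm q D = (q / Nat.gcd q D) * D := by
  have hg0 : 0 < Nat.gcd q D := Nat.gcd_pos_of_pos_left _ hq
  rw [Nat.lcm]
  have h1 : q * D = (q / Nat.gcd q D * D) * Nat.gcd q D := by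
    rw [mul_assoc, mul_comm D, ← mul_assoc, Nat.div_mul_cancel (Nat.gcd_dvd_left q D)]
  rw [h1, Nat.mul_div_cancel _ hg0]

lemma Acount_empty (q a D : ℕ) (hga : ¬ Nat.gcd q D ∣ a) (X : ℝ) :
    {n : ℕ | 0 < n ∧ (n : ℝ) ≤ X ∧ D ∣ n ∧ n ≡ a [MOD q]} = ∅ := by
  ext n
  simp only [Set.mem_setOf_eq, Set.mem_empty_iff_false, iff_false]
  rintro ⟨hn, hnX, hDn, hmod⟩
  apply hga
  have h1 : Nat.gcd q D ∣ n := dvd_trans (Nat.gcd_dvd_right q D) hDn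
  have h2 : n ≡ a [MOD Nat.gcd q D] := hmod.of_dvd (Nat.gcd_dvd_left q D)
  exact Nat.modEq_zero_iff_dvd.mp
    (h2.symm.trans (Nat.modEq_zero_iff_dvd.mpr h1))

lemma Acount_est (q a D : ℕ) (hq : 0 < q) (hD : 0 < D) (hga : Nat.gcd q D ∣ a)
    (X : ℝ) (hX : 0 ≤ X) :
    |(Nat.card {n : ℕ | 0 < n ∧ (n : ℝ) ≤ X ∧ D ∣ n ∧ n ≡ a [MOD q]} : ℝ)
      - X / (Nat.lcm q D)| ≤ 2 := by
  obtain ⟨c, hc⟩ := cong_solve q a D hq hD hga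
  set v := q / Nat.gcd q D with hv
  have hg0 : 0 < Nat.gcd q D := Nat.gcd_pos_of_pos_left _ hq
  have hv0 : 0 < v := Nat.div_pos (Nat.le_of_dvd hq (Nat.gcd_dvd_left q D)) hg0
  have hD0 : (0:ℝ) < D := by exact_mod_cast hD
  have himg : {n : ℕ | 0 < n ∧ (n : ℝ) ≤ X ∧ D ∣ n ∧ n ≡ a [MOD q]}
      = (fun m => D * m) '' {m : ℕ | 0 < m ∧ (m : ℝ) ≤ X / D ∧ m ≡ c [MOD v]} := by
    ext n
    simp only [Set.mem_setOf_eq, Set.mem_image]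
    constructor
    · rintro ⟨hn, hnX, ⟨m, rfl⟩, hmod⟩
      refine ⟨m, ⟨?_, ?_, (hc m).mp hmod⟩, rfl⟩
      · rcases Nat.eq_zero_or_pos m with h | h
        · simp [h] at hn
        · exact h
      · rw [le_div_iff₀ hD0]
        calc (m:ℝ) * D = ((D * m : ℕ) : ℝ) := by push_cast; ring
          _ ≤ X := hnX
    · rintro ⟨m, ⟨hm, hmX, hmod⟩, rfl⟩
      refine ⟨by positivity, ?_, Dvd.intro m rfl, (hc m).mpr hmod⟩
      · rw [le_div_iff₀ hD0] at hmX
        push_cast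
        calc (D:ℝ) * m = (m:ℝ) * D := by ring
          _ ≤ X := hmX
  rw [himg, Nat.card_image_of_injective
    (fun x y h => Nat.eq_of_mul_eq_mul_left hD h) _]
  have hlcm : (Nat.lcm q D : ℝ) = (v : ℝ) * D := by
    rw [lcm_eq q D hq hD]; push_cast; rfl
  have : X / (Nat.lcm q D : ℝ) = (X / D) / v := by
    rw [hlcm, div_div]
    ring_nf
  rw [this]
  exact count_modeq v c hv0 (X / D) (by positivity)

lemma count_eq (k q a : ℕ) (hk : 1 ≤ k) (X : ℝ) (hX : 0 ≤ X) :
    (Nat.card {n : ℕ | 0 < n ∧ (n : ℝ) ≤ X ∧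
        (∀ p : ℕ, p.Prime → ¬ p ^ k ∣ n) ∧ n ≡ a [MOD q]} : ℝ)
      = ∑ d ∈ Finset.Ioc 0 ⌊X⌋₊, (moebius d : ℝ) *
          (Nat.card {n : ℕ | 0 < n ∧ (n : ℝ) ≤ X ∧ d ^ k ∣ n ∧ n ≡ a [MOD q]} : ℝ) := by
  set M := ⌊X⌋₊ with hM
  have key : (#{x ∈ Finset.Ioc 0 M | (∀ p : ℕ, p.Prime → ¬ p ^ k ∣ x) ∧ x ≡ a [MOD q]} : ℤ)
      = ∑ d ∈ Finset.Ioc 0 M, (moebius d : ℤ) *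
          (#{x ∈ Finset.Ioc 0 M | d ^ k ∣ x ∧ x ≡ a [MOD q]} : ℤ) := by
    rw [← Finset.sum_boole]
    have step1 : ∀ n ∈ Finset.Ioc 0 M,
        (if (∀ p : ℕ, p.Prime → ¬ p ^ k ∣ n) ∧ n ≡ a [MOD q] then (1:ℤ) else 0)
          = ∑ d ∈ Finset.Ioc 0 M,
              (if n ≡ a [MOD q] ∧ d ^ k ∣ n then (moebius d : ℤ) else 0) := by
      intro n hn
      rw [Finset.mem_Ioc] at hn
      have hn0 : n ≠ 0 := hn.1.ne'
      by_cases hQ : n ≡ a [MOD q]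
      · simp only [hQ, and_true, true_and]
        rw [← kfree_sum k n hk hn0]
        apply Finset.sum_subset
        · intro d hd
          rw [Nat.mem_divisors] at hd
          rw [Finset.mem_Ioc]
          exact ⟨Nat.pos_of_dvd_of_pos hd.1 hn.1, le_trans (Nat.le_of_dvd hn.1 hd.1) hn.2⟩
        · intro d _ hd
          rw [if_neg]
          intro hdk
          exact hd (Nat.mem_divisors.mpr ⟨dvd_trans (dvd_pow_self d (by omega)) hdk, hn0⟩)
      · simp only [hQ, and_false, false_and, if_false, Finset.sum_const_zero]
    rw [Finset.sum_congr rfl step1, Finset.sum_comm]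
    apply Finset.sum_congr rfl
    intro d _
    rw [Finset.card_filter]
    push_cast
    rw [Finset.mul_sum]
    apply Finset.sum_congr rfl
    intro n _
    by_cases h1 : n ≡ a [MOD q] <;> by_cases h2 : d ^ k ∣ n <;>
      simp [h1, h2]
  have hL := setcard_eq X hX (fun n => (∀ p : ℕ, p.Prime → ¬ p ^ k ∣ n) ∧ n ≡ a [MOD q])
  have hR := fun d => setcard_eq X hX (fun n => d ^ k ∣ n ∧ n ≡ a [MOD q])
  rw [hL]
  have : ∀ d ∈ Finset.Ioc 0 M, (moebius d : ℝ) *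
      (Nat.card {n : ℕ | 0 < n ∧ (n : ℝ) ≤ X ∧ d ^ k ∣ n ∧ n ≡ a [MOD q]} : ℝ)
      = (moebius d : ℝ) * (#{x ∈ Finset.Ioc 0 M | d ^ k ∣ x ∧ x ≡ a [MOD q]} : ℝ) := by
    intro d _
    rw [hR d]
  rw [Finset.sum_congr rfl this]
  exact_mod_cast key

end AuxLemmas

section Main

open Finset
open scoped Classical

/-- The `k`-free numbers `n ≤ X` in the class `a mod q` have asymptotic density `η(q,a)`. -/
theorem statement17 (k : ℕ) (hk : 2 ≤ k) (q a : ℕ) (hq : 0 < q) (ha : 0 < a) :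
    Tendsto (fun X : ℝ =>
        (Nat.card {n : ℕ | 0 < n ∧ (n : ℝ) ≤ X ∧
          (∀ p : ℕ, p.Prime → ¬ p ^ k ∣ n) ∧ n ≡ a [MOD q]} : ℝ) / X)
      atTop (nhds (eta k q a)) := by
  classical
  -- the inner counting function
  set A : ℕ → ℝ → ℝ := fun d X =>
    (Nat.card {n : ℕ | 0 < n ∧ (n : ℝ) ≤ X ∧ d ^ k ∣ n ∧ n ≡ a [MOD q]} : ℝ) with hA
  set f : ℝ → ℕ+ → ℝ := fun X d => (moebius (d : ℕ) : ℝ) * A d X / X with hf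
  set g : ℕ+ → ℝ := fun d => if Nat.gcd q ((d : ℕ) ^ k) ∣ a then
    (moebius (d : ℕ) : ℝ) / (Nat.lcm q ((d : ℕ) ^ k) : ℝ) else 0 with hg
  have hDpos : ∀ d : ℕ+, 0 < (d : ℕ) ^ k := fun d => pow_pos d.pos k
  -- upper bound on A: A d X ≤ X / d^k for X ≥ 0
  have hAle : ∀ (d : ℕ+) (X : ℝ), 0 ≤ X → A d X ≤ X / ((d : ℕ) ^ k : ℝ) := by
    intro d X hX
    rw [hA]
    simp only
    rw [setcard_eq X hX]
    have hsub : {x ∈ Finset.Ioc 0 ⌊X⌋₊ | (d : ℕ) ^ k ∣ x ∧ x ≡ a [MOD q]}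
        ⊆ {x ∈ Finset.Ioc 0 ⌊X⌋₊ | (d : ℕ) ^ k ∣ x} :=
      Finset.monotone_filter_right _ (fun x _ hx => hx.1)
    have h1 : ({x ∈ Finset.Ioc 0 ⌊X⌋₊ | (d : ℕ) ^ k ∣ x ∧ x ≡ a [MOD q]}).card
        ≤ ⌊X⌋₊ / (d : ℕ) ^ k :=
      le_trans (Finset.card_le_card hsub)
        (le_of_eq (Nat.Ioc_filter_dvd_card_eq_div _ _))
    have hfloor : (⌊X⌋₊ : ℝ) ≤ X := Nat.floor_le hX
    have hdk0 : (0:ℝ) < ((d:ℕ):ℝ) ^ k := by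
      have : (0:ℝ) < ((d:ℕ):ℝ) := by exact_mod_cast d.pos
      positivity
    calc (({x ∈ Finset.Ioc 0 ⌊X⌋₊ | (d : ℕ) ^ k ∣ x ∧ x ≡ a [MOD q]}).card : ℝ)
        ≤ ((⌊X⌋₊ / (d : ℕ) ^ k : ℕ) : ℝ) := by exact_mod_cast h1
      _ ≤ (⌊X⌋₊ : ℝ) / (((d : ℕ) ^ k : ℕ) : ℝ) := Nat.cast_div_le
      _ = (⌊X⌋₊ : ℝ) / ((d:ℕ):ℝ) ^ k := by push_cast; rfl
      _ ≤ X / ((d:ℕ):ℝ) ^ k := by gcongr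
  -- pointwise limits
  have hlim : ∀ d : ℕ+, Tendsto (fun X => f X d) atTop (nhds (g d)) := by
    intro d
    by_cases hga : Nat.gcd q ((d : ℕ) ^ k) ∣ a
    · -- A d X / X → 1 / lcm
      have hAX : Tendsto (fun X => A d X / X) atTop
          (nhds (1 / (Nat.lcm q ((d : ℕ) ^ k) : ℝ))) := by
        have hL0 : (0:ℝ) < (Nat.lcm q ((d : ℕ) ^ k) : ℝ) := by
          have := Nat.pos_of_ne_zero (Nat.lcm_ne_zero hq.ne' (hDpos d).ne')
          exact_mod_cast this
        have hev : ∀ᶠ X in atTop, |A d X / X - 1 / (Nat.lcm q ((d : ℕ) ^ k) : ℝ)| ≤ 2 / X := by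
          filter_upwards [eventually_ge_atTop (1:ℝ)] with X hX1
          have hX0 : (0:ℝ) < X := by linarith
          have hest := Acount_est q a ((d : ℕ) ^ k) hq (hDpos d) hga X hX0.le
          have : A d X / X - 1 / (Nat.lcm q ((d : ℕ) ^ k) : ℝ)
              = (A d X - X / (Nat.lcm q ((d : ℕ) ^ k) : ℝ)) / X := by
            field_simp
          rw [this, abs_div, abs_of_pos hX0, div_le_div_iff_of_pos_right hX0]
          exact hest
        have h2X : Tendsto (fun X : ℝ => 2 / X) atTop (nhds 0) :=
          tendsto_const_nhds.div_atTop tendsto_id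
        rw [← tendsto_sub_nhds_zero_iff]
        refine squeeze_zero_norm' ?_ h2X
        filter_upwards [hev] with X hX
        simpa using hX
      have : (fun X => f X d)
          = fun X => (moebius (d : ℕ) : ℝ) * (A d X / X) := by
        funext X; rw [hf]; simp only [mul_div_assoc]
      rw [this, hg]
      simp only [hga, if_true]
      rw [div_eq_mul_one_div ((moebius (d : ℕ) : ℝ))]
      exact hAX.const_mul _
    · -- empty case
      have hA0 : ∀ X : ℝ, A d X = 0 := by
        intro X
        rw [hA]
        simp only
        rw [Acount_empty q a _ hga X]
        simp
      have : (fun X => f X d) = fun X => 0 := by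
        funext X
        rw [hf]; simp only [hA0 X, mul_zero, zero_div]
      rw [this, hg]
      simp only [hga, if_false]
      exact tendsto_const_nhds
  -- summable bound
  have hbound_sum : Summable (fun d : ℕ+ => 1 / ((d:ℕ):ℝ) ^ 2) := by
    have h0 : Summable (fun n : ℕ => 1 / (n:ℝ) ^ 2) := by
      simpa using Real.summable_one_div_nat_pow.mpr one_lt_two
    exact h0.comp_injective (fun x y h => PNat.coe_injective h)
  -- uniform bound
  have hbd : ∀ᶠ X in atTop, ∀ d : ℕ+, ‖f X d‖ ≤ 1 / ((d:ℕ):ℝ) ^ 2 := by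
    filter_upwards [eventually_ge_atTop (1:ℝ)] with X hX1 d
    have hX0 : (0:ℝ) < X := by linarith
    have hd1 : (1:ℝ) ≤ ((d:ℕ):ℝ) := by exact_mod_cast d.one_le
    have hdk : ((d:ℕ):ℝ) ^ 2 ≤ ((d:ℕ):ℝ) ^ k := pow_le_pow_right₀ hd1 hk
    have hd2 : (0:ℝ) < ((d:ℕ):ℝ) ^ 2 := by positivity
    have hdk0 : (0:ℝ) < ((d:ℕ):ℝ) ^ k := by positivity
    have hmu : |(moebius (d:ℕ) : ℝ)| ≤ 1 := by
      exact_mod_cast (ArithmeticFunction.abs_moebius_le_one (n := (d:ℕ)))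
    have hAnn : 0 ≤ A d X := by rw [hA]; positivity
    have hAX : A d X / X ≤ 1 / ((d:ℕ):ℝ) ^ k := by
      rw [div_le_div_iff₀ hX0 hdk0]
      have := hAle d X hX0.le
      calc A d X * ((d:ℕ):ℝ) ^ k ≤ (X / ((d:ℕ):ℝ) ^ k) * ((d:ℕ):ℝ) ^ k := by
            gcongr
        _ = 1 * X := by field_simp
    rw [hf]
    simp only [norm_mul, norm_div, Real.norm_eq_abs]
    calc |(moebius (d:ℕ) : ℝ)| * |A d X| / |X|
        ≤ 1 * |A d X| / |X| := by gcongr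
      _ = A d X / X := by rw [one_mul, abs_of_nonneg hAnn, abs_of_pos hX0]
      _ ≤ 1 / ((d:ℕ):ℝ) ^ k := hAX
      _ ≤ 1 / ((d:ℕ):ℝ) ^ 2 := by gcongr 1 / ?_
  -- Tannery
  have htan : Tendsto (fun X => ∑' d : ℕ+, f X d) atTop (nhds (∑' d : ℕ+, g d)) :=
    tendsto_tsum_of_dominated_convergence hbound_sum hlim hbd
  have heta : eta k q a = ∑' d : ℕ+, g d := rfl
  rw [heta]
  apply htan.congr'
  -- eventual equality of the two functions
  filter_upwards [eventually_ge_atTop (1:ℝ)] with X hX1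
  have hX0 : (0:ℝ) < X := by linarith
  -- tsum is a finite sum
  set M := ⌊X⌋₊ with hM
  have hsupport : ∀ n : ℕ, n ∉ Finset.Ioc 0 M → (moebius n : ℝ) * A n X = 0 := by
    intro n hn
    rw [Finset.mem_Ioc] at hn
    push_neg at hn
    rcases Nat.eq_zero_or_pos n with h0 | h0
    · subst h0; simp
    · have hnM := hn h0
      have : {m : ℕ | 0 < m ∧ (m : ℝ) ≤ X ∧ n ^ k ∣ m ∧ m ≡ a [MOD q]} = ∅ := by
        ext m
        simp only [Set.mem_setOf_eq, Set.mem_empty_iff_false, iff_false]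
        rintro ⟨hm, hmX, hdvd, _⟩
        have hmM : m ≤ M := Nat.le_floor hmX
        have h1 : n ^ k ≤ m := Nat.le_of_dvd hm hdvd
        have h2 : n ≤ n ^ k := Nat.le_self_pow (by omega) n
        omega
      rw [hA]; simp only [this]; simp
  have htsumN : ∑' d : ℕ+, (moebius ((d:ℕ)) : ℝ) * A d X
      = ∑ d ∈ Finset.Ioc 0 M, (moebius d : ℝ) * A d X := by
    have hinj : Function.Injective ((↑·) : ℕ+ → ℕ) := fun x y h => PNat.coe_injective h
    have hrange : ∀ n : ℕ, n ∉ Set.range ((↑·) : ℕ+ → ℕ) → (moebius n : ℝ) * A n X = 0 := by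
      intro n hn
      have : n = 0 := by
        by_contra h
        exact hn ⟨⟨n, Nat.pos_of_ne_zero h⟩, rfl⟩
      subst this; simp
    have hsupp2 : Function.support (fun n : ℕ => (moebius n : ℝ) * A n X)
        ⊆ Set.range ((↑·) : ℕ+ → ℕ) := by
      intro n hn
      simp only [Function.mem_support] at hn
      rcases Nat.eq_zero_or_pos n with h0 | h0
      · exfalso; apply hn; subst h0; simp
      · exact ⟨⟨n, h0⟩, rfl⟩
    calc ∑' d : ℕ+, (moebius ((d:ℕ)) : ℝ) * A d X
        = ∑' n : ℕ, (moebius n : ℝ) * A n X := hinj.tsum_eq hsupp2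
      _ = ∑ d ∈ Finset.Ioc 0 M, (moebius d : ℝ) * A d X := tsum_eq_sum hsupport
  have hfsum : ∑' d : ℕ+, f X d
      = (∑ d ∈ Finset.Ioc 0 M, (moebius d : ℝ) * A d X) / X := by
    rw [← htsumN, ← tsum_div_const]
  rw [hfsum, ← count_eq k q a (by omega) X hX0.le]

end Main
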